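/- Let s ≥ 2, λ, μ > 0 with λ < sμ, and let p ∈ [0,1]^s be a probability vector with p ⪯_GSC (1/s,...,1/s). Then for every nondecreasing x ∈ ℤ₊^s with Σ_{i=1}^s x_i > s(λ + sμ)/(2(sμ − λ)), the one-step drift D(x) = Σ_{i=1}^s (λ/(λ + pos(x)μ)) p_i ((x_i+1)² − x_i²) + Σ_{i=1}^s (μ/(λ + pos(x)μ)) (((x_i−1)⁺)² − x_i²) is strictly negative, where pos(x) is the number of strictly positive coordinates of x. -/

import Mathlib

open Finset

lemma swap_tri (s : ℕ) (q d : ℕ → ℝ) :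
    ∑ i ∈ Icc 1 s, q i * ∑ k ∈ Icc 1 i, d k
      = ∑ k ∈ Icc 1 s, (∑ i ∈ Icc k s, q i) * d k := by
  simp_rw [mul_sum, sum_mul]
  exact sum_comm' (fun k i => by simp only [mem_Icc]; omega)

-- telescoping: for y with y 0 = 0, x i = ∑_{k∈Icc 1 i} (y k - y (k-1))
lemma telescope (y : ℕ → ℝ) (i : ℕ) :
    ∑ k ∈ Icc 1 i, (y k - y (k - 1)) = y i - y 0 := by
  induction i with
  | zero => simp
  | succ n ih =>
      rw [Finset.sum_Icc_succ_top (by omega : 1 ≤ n + 1), ih]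
      simp only [Nat.add_sub_cancel]
      ring

lemma key_ineq (s : ℕ) (hs : 1 ≤ s) (p : ℕ → ℝ)
    (hgsc : ∀ k, 1 ≤ k → k ≤ s →
      ∑ i ∈ Icc k s, p i ≤ ∑ i ∈ Icc k s, (1 / (s : ℝ)))
    (x : ℕ → ℕ) (hmono : ∀ i j, 1 ≤ i → i ≤ j → j ≤ s → x i ≤ x j) :
    ∑ i ∈ Icc 1 s, p i * (x i : ℝ) ≤ ∑ i ∈ Icc 1 s, (1 / (s : ℝ)) * (x i : ℝ) := by
  set y : ℕ → ℝ := fun k => if k = 0 then 0 else (x k : ℝ) with hy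
  have hx : ∀ i ∈ Icc 1 s, (x i : ℝ) = ∑ k ∈ Icc 1 i, (y k - y (k - 1)) := by
    intro i hi
    simp only [mem_Icc] at hi
    rw [telescope]
    have h0 : y 0 = 0 := by simp [hy]
    have h1 : y i = (x i : ℝ) := by simp only [hy]; rw [if_neg (by omega : i ≠ 0)]
    rw [h0, h1, sub_zero]
  have hd : ∀ k ∈ Icc 1 s, 0 ≤ y k - y (k - 1) := by
    intro k hk
    simp only [mem_Icc] at hk
    rcases Nat.eq_or_lt_of_le hk.1 with h1 | h1
    · simp [hy, ← h1]
    · have : x (k - 1) ≤ x k := hmono (k - 1) k (by omega) (by omega) hk.2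
      simp only [hy, if_neg (by omega : k ≠ 0), if_neg (by omega : k - 1 ≠ 0)]
      have : (x (k-1) : ℝ) ≤ (x k : ℝ) := by exact_mod_cast this
      linarith
  calc ∑ i ∈ Icc 1 s, p i * (x i : ℝ)
      = ∑ i ∈ Icc 1 s, p i * ∑ k ∈ Icc 1 i, (y k - y (k - 1)) := by
        exact sum_congr rfl fun i hi => by rw [hx i hi]
    _ = ∑ k ∈ Icc 1 s, (∑ i ∈ Icc k s, p i) * (y k - y (k - 1)) := swap_tri ..
    _ ≤ ∑ k ∈ Icc 1 s, (∑ i ∈ Icc k s, (1 / (s : ℝ))) * (y k - y (k - 1)) := by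
        refine sum_le_sum fun k hk => ?_
        simp only [mem_Icc] at hk
        exact mul_le_mul_of_nonneg_right (hgsc k hk.1 hk.2) (hd k (mem_Icc.mpr hk))
    _ = ∑ i ∈ Icc 1 s, (1 / (s : ℝ)) * ∑ k ∈ Icc 1 i, (y k - y (k - 1)) :=
        (swap_tri ..).symm
    _ = ∑ i ∈ Icc 1 s, (1 / (s : ℝ)) * (x i : ℝ) :=
        sum_congr rfl fun i hi => by rw [hx i hi]

theorem stmt_18 (s : ℕ) (hs : 2 ≤ s) (lam mu : ℝ) (hlam : 0 < lam) (hmu : 0 < mu)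
    (hload : lam < s * mu)
    (p : ℕ → ℝ) (hp0 : ∀ i ∈ Finset.Icc 1 s, 0 ≤ p i)
    (hp1 : ∑ i ∈ Finset.Icc 1 s, p i = 1)
    (hgsc : ∀ k, 1 ≤ k → k ≤ s →
      ∑ i ∈ Finset.Icc k s, p i ≤ ∑ i ∈ Finset.Icc k s, (1 / (s : ℝ)))
    (x : ℕ → ℕ) (hmono : ∀ i j, 1 ≤ i → i ≤ j → j ≤ s → x i ≤ x j)
    (hbig : (s : ℝ) * (lam + s * mu) / (2 * (s * mu - lam))
      < ∑ i ∈ Finset.Icc 1 s, (x i : ℝ)) :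
    (∑ i ∈ Finset.Icc 1 s,
        (lam / (lam + ((Finset.Icc 1 s).filter (fun i => 0 < x i)).card * mu)) * p i *
          (((x i : ℝ) + 1) ^ 2 - (x i : ℝ) ^ 2))
      + (∑ i ∈ Finset.Icc 1 s,
          (mu / (lam + ((Finset.Icc 1 s).filter (fun i => 0 < x i)).card * mu)) *
            ((max ((x i : ℝ) - 1) 0) ^ 2 - (x i : ℝ) ^ 2)) < 0 := by
  set N : ℕ := ((Finset.Icc 1 s).filter (fun i => 0 < x i)).card with hN
  set S : ℝ := ∑ i ∈ Icc 1 s, (x i : ℝ) with hS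
  set T : ℝ := ∑ i ∈ Icc 1 s, p i * (x i : ℝ) with hT
  have hsr : (0:ℝ) < s := by exact_mod_cast (by omega : 0 < s)
  have hNs : N ≤ s := by
    have := Finset.card_filter_le (Icc 1 s) (fun i => 0 < x i)
    simpa [hN] using this
  have hN_le : (N:ℝ) ≤ s := by exact_mod_cast hNs
  have hd0 : (0:ℝ) < lam + (N:ℝ) * mu := by positivity
  have hA : ∑ i ∈ Icc 1 s,
      (lam / (lam + (N:ℝ) * mu)) * p i * (((x i : ℝ) + 1) ^ 2 - (x i : ℝ) ^ 2)
      = (lam / (lam + (N:ℝ) * mu)) * (2 * T + 1) := by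
    have : ∀ i ∈ Icc 1 s,
        (lam / (lam + (N:ℝ) * mu)) * p i * (((x i : ℝ) + 1) ^ 2 - (x i : ℝ) ^ 2)
        = (lam / (lam + (N:ℝ) * mu)) * (2 * (p i * (x i : ℝ)) + p i) := fun i _ => by ring
    rw [Finset.sum_congr rfl this, ← Finset.mul_sum]
    congr 1
    rw [Finset.sum_add_distrib, hp1, ← Finset.mul_sum, ← hT]
  have hfs : ∑ i ∈ (Icc 1 s).filter (fun i => 0 < x i), (x i : ℝ) = S := by
    rw [hS]
    refine Finset.sum_filter_of_ne fun i _ h => ?_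
    rcases Nat.eq_zero_or_pos (x i) with h0 | h0
    · exact absurd (by rw [h0]; simp) h
    · exact h0
  have hB : ∑ i ∈ Icc 1 s,
      (mu / (lam + (N:ℝ) * mu)) * ((max ((x i : ℝ) - 1) 0) ^ 2 - (x i : ℝ) ^ 2)
      = (mu / (lam + (N:ℝ) * mu)) * ((N : ℝ) - 2 * S) := by
    rw [← Finset.sum_filter_add_sum_filter_not (Icc 1 s) (fun i => 0 < x i)]
    have h2 : ∑ i ∈ (Icc 1 s).filter (fun i => ¬ 0 < x i),
        (mu / (lam + (N:ℝ) * mu)) * ((max ((x i : ℝ) - 1) 0) ^ 2 - (x i : ℝ) ^ 2) = 0 := by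
      refine Finset.sum_eq_zero fun i hi => ?_
      have hx0 : x i = 0 := by
        have := (Finset.mem_filter.mp hi).2; omega
      rw [hx0]
      norm_num
    rw [h2, add_zero]
    have h1 : ∀ i ∈ (Icc 1 s).filter (fun i => 0 < x i),
        (mu / (lam + (N:ℝ) * mu)) * ((max ((x i : ℝ) - 1) 0) ^ 2 - (x i : ℝ) ^ 2)
        = (mu / (lam + (N:ℝ) * mu)) * (1 - 2 * (x i : ℝ)) := by
      intro i hi
      have hx1 : 1 ≤ x i := (Finset.mem_filter.mp hi).2
      have hx1' : (1:ℝ) ≤ (x i : ℝ) := by exact_mod_cast hx1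
      rw [max_eq_left (by linarith : (0:ℝ) ≤ (x i : ℝ) - 1)]
      ring
    rw [Finset.sum_congr rfl h1, ← Finset.mul_sum]
    congr 1
    rw [Finset.sum_sub_distrib, Finset.sum_const, ← Finset.mul_sum, hfs, ← hN,
      nsmul_eq_mul, mul_one]
  have hT_le : T * (s : ℝ) ≤ S := by
    have h := key_ineq s (by omega) p hgsc x hmono
    have h2 : ∑ i ∈ Icc 1 s, (1 / (s : ℝ)) * (x i : ℝ) = S / s := by
      rw [← Finset.mul_sum, ← hS]; ring
    rw [h2, ← hT] at h
    exact (le_div_iff₀ hsr).mp h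
  have hSmu : (s : ℝ) * (lam + s * mu) < 2 * S * ((s : ℝ) * mu - lam) := by
    rw [div_lt_iff₀ (by linarith : (0:ℝ) < 2 * ((s:ℝ) * mu - lam))] at hbig
    linarith
  have key : lam * (2 * T + 1) + mu * ((N : ℝ) - 2 * S) < 0 := by
    have hE : (s : ℝ) * (lam * (2 * T + 1) + mu * ((N : ℝ) - 2 * S)) < 0 := by
      nlinarith [mul_le_mul_of_nonneg_left hT_le hlam.le,
        mul_le_mul_of_nonneg_left hN_le (mul_nonneg hmu.le hsr.le), hSmu]
    nlinarith [hE, hsr]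
  calc (∑ i ∈ Icc 1 s,
        (lam / (lam + (N:ℝ) * mu)) * p i * (((x i : ℝ) + 1) ^ 2 - (x i : ℝ) ^ 2))
      + (∑ i ∈ Icc 1 s,
          (mu / (lam + (N:ℝ) * mu)) * ((max ((x i : ℝ) - 1) 0) ^ 2 - (x i : ℝ) ^ 2))
      = (lam * (2 * T + 1) + mu * ((N : ℝ) - 2 * S)) / (lam + (N:ℝ) * mu) := by
        rw [hA, hB]; ring
    _ < 0 := div_neg_of_neg_of_pos key hd0
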